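/- Let n ≥ 1 and let w_0, …, w_n be n+1 unit vectors in C^n. Then the minimum, over all index choices 0 ≤ j_1 < … < j_n ≤ n, of |det(w_{j_1}, …, w_{j_n})| is at most sqrt((n+1)^(n-1) / n^n). -/

import Mathlib

/-- The maximin determinants problem for `n+1` unit vectors in `ℂⁿ`: the minimum,
over all strictly increasing index choices `0 ≤ j₁ < ⋯ < jₙ ≤ n`, of
`|det(w_{j₁}, …, w_{jₙ})|` is at most `√((n+1)^(n-1) / nⁿ)`. -/
theorem stmt0 (n : ℕ) (hn : 1 ≤ n) (w : Fin (n + 1) → EuclideanSpace ℂ (Fin n))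
    (hw : ∀ j, ‖w j‖ = 1) :
    ∃ s : Fin n → Fin (n + 1), StrictMono s ∧
      ‖Matrix.det (Matrix.of fun i a => w (s a) i)‖ ≤
        Real.sqrt (((n : ℝ) + 1) ^ (n - 1) / (n : ℝ) ^ n) := by
  classical
  open Matrix Finset ComplexOrder in
  -- ### Setup: the Gram matrix `G` of the `n+1` vectors
  set W : Matrix (Fin n) (Fin (n+1)) ℂ := Matrix.of fun i j => w j i with hWdef
  set G : Matrix (Fin (n+1)) (Fin (n+1)) ℂ := Wᴴ * W with hGdef
  set M : Fin (n+1) → Matrix (Fin n) (Fin n) ℂ :=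
    fun j => Matrix.of fun i a => w (j.succAbove a) i with hMdef
  set d : Fin (n+1) → ℝ := fun j => ‖(M j).det‖ with hddef
  have hPSD : G.PosSemidef := Matrix.posSemidef_conjTranspose_mul_self W
  have hHerm : G.IsHermitian := hPSD.1
  have hdet : G.det = 0 := by
    by_contra h
    have h1 : G.rank = n + 1 := by
      rw [Matrix.rank_of_isUnit G ((Matrix.isUnit_iff_isUnit_det G).mpr (isUnit_iff_ne_zero.mpr h))]
      simp
    have h2 : G.rank ≤ n := le_trans (Matrix.rank_mul_le_left _ _)
      (by simpa using Matrix.rank_le_width Wᴴ)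
    omega
  have hdiag : ∀ j, G j j = 1 := by
    intro j
    have : G j j = (inner ℂ (w j) (w j) : ℂ) := by
      simp [hGdef, Matrix.mul_apply, hWdef, PiLp.inner_apply, RCLike.inner_apply, -inner_self_eq_norm_sq_to_K, mul_comm]
    rw [this, inner_self_eq_norm_sq_to_K, hw]
    norm_num
  -- ### Spectral data
  set μ : Fin (n+1) → ℝ := hHerm.eigenvalues with hμ
  set U : Matrix (Fin (n+1)) (Fin (n+1)) ℂ :=
    (hHerm.eigenvectorUnitary : Matrix (Fin (n+1)) (Fin (n+1)) ℂ) with hU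
  have hUU' : star U * U = 1 := (Matrix.mem_unitaryGroup_iff').mp hHerm.eigenvectorUnitary.2
  have hspec : G = U * Matrix.diagonal (fun i => (μ i : ℂ)) * star U := by
    have := hHerm.spectral_theorem
    rw [Unitary.conjStarAlgAut_apply] at this
    exact this
  have hpos : ∀ i, 0 ≤ μ i := hPSD.eigenvalues_nonneg
  have htr : Matrix.trace G = ∑ i, (μ i : ℂ) := by
    rw [hspec, Matrix.trace_mul_cycle, hUU', Matrix.one_mul, Matrix.trace_diagonal]
  have htr2 : ∑ i, μ i = n + 1 := by
    have h1 : Matrix.trace G = ((n:ℂ) + 1) := by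
      simp [Matrix.trace, Matrix.diag, hdiag]
    rw [htr] at h1
    have : ((∑ i, μ i : ℝ) : ℂ) = (((n:ℝ) + 1 : ℝ) : ℂ) := by push_cast; simpa using h1
    exact_mod_cast this
  have hz : ∃ i0, μ i0 = 0 := by
    have h1 := hHerm.det_eq_prod_eigenvalues
    rw [hdet] at h1
    have : ∏ i, μ i = 0 := by
      rw [hμ]
      exact RCLike.ofReal_eq_zero.mp (by exact_mod_cast h1.symm)
    obtain ⟨i0, _, h⟩ := Finset.prod_eq_zero_iff.mp this
    exact ⟨i0, h⟩
  obtain ⟨i0, hi0⟩ := hz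
  -- ### Trace of the adjugate, two ways
  have hadj : Matrix.trace (Matrix.adjugate G) = ∑ i, ∏ k ∈ Finset.univ.erase i, (μ k : ℂ) := by
    rw [hspec, Matrix.adjugate_mul_distrib, Matrix.adjugate_mul_distrib,
      ← Matrix.mul_assoc, Matrix.trace_mul_cycle, ← Matrix.adjugate_mul_distrib, hUU',
      Matrix.adjugate_one, Matrix.one_mul, Matrix.adjugate_diagonal, Matrix.trace_diagonal]
  have hminor : ∀ j, Matrix.adjugate G j j = (G.submatrix j.succAbove j.succAbove).det := by
    intro j
    rw [Matrix.adjugate_apply, Matrix.det_succ_row _ j]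
    simp only [Matrix.updateRow_self]
    rw [Finset.sum_eq_single j]
    · have hsub : (G.updateRow j (Pi.single j 1)).submatrix j.succAbove j.succAbove
          = G.submatrix j.succAbove j.succAbove := by
        ext a b
        simp [Matrix.submatrix_apply, Matrix.updateRow_ne (Fin.succAbove_ne j a)]
      have hsign : (-1:ℂ)^((j:ℕ)+(j:ℕ)) = 1 := by
        rw [← two_mul, pow_mul]; norm_num
      rw [hsub, hsign, Pi.single_eq_same, one_mul, one_mul]
    · intro k _ hk
      simp [Pi.single_eq_of_ne hk]
    · simp
  have hMM : ∀ j, (G.submatrix j.succAbove j.succAbove).det = ((d j)^2 : ℝ) := by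
    intro j
    have : G.submatrix j.succAbove j.succAbove = (M j)ᴴ * (M j) := by
      ext a b
      simp [hGdef, Matrix.mul_apply, hWdef, hMdef, Matrix.submatrix_apply]
    rw [this, Matrix.det_mul, Matrix.det_conjTranspose, hddef]
    rw [← Complex.normSq_eq_norm_sq]
    exact (Complex.normSq_eq_conj_mul_self (z := (M j).det)).symm ▸ rfl
  -- ### The key real identity and bound
  have hkey : ∑ j, (d j)^2 = ∑ i, ∏ k ∈ Finset.univ.erase i, μ k := by
    have h1 : Matrix.trace (Matrix.adjugate G) = ∑ j, ((d j)^2 : ℂ) := by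
      unfold Matrix.trace
      apply Finset.sum_congr rfl
      intro j _
      rw [Matrix.diag_apply, hminor j, hMM j]
      push_cast
      ring
    rw [hadj] at h1
    have h2 : ((∑ j, (d j)^2 : ℝ) : ℂ) = ((∑ i, ∏ k ∈ Finset.univ.erase i, μ k : ℝ) : ℂ) := by
      push_cast
      exact h1.symm
    exact_mod_cast h2
  have hn' : (0:ℝ) < n := by exact_mod_cast hn
  have hcard : (Finset.univ.erase i0).card = n := by
    rw [Finset.card_erase_of_mem (Finset.mem_univ _)]; simp
  have hsum0 : ∑ k ∈ Finset.univ.erase i0, μ k = n + 1 := by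
    rw [← htr2, Finset.sum_erase _ (by rw [hi0])]
  have hcollapse : ∑ i, ∏ k ∈ Finset.univ.erase i, μ k = ∏ k ∈ Finset.univ.erase i0, μ k := by
    rw [Finset.sum_eq_single i0]
    · intro i _ hi
      exact Finset.prod_eq_zero (Finset.mem_erase.mpr ⟨(Ne.symm hi), Finset.mem_univ _⟩) hi0
    · simp
  have hAMGM : ∏ k ∈ Finset.univ.erase i0, μ k ≤ (((n:ℝ)+1)/n)^n := by
    have hgm := Real.geom_mean_le_arith_mean_weighted (Finset.univ.erase i0)
      (fun _ => 1/(n:ℝ)) μ (fun i _ => by positivity)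
      (by rw [Finset.sum_const, hcard, nsmul_eq_mul]; field_simp) (fun i _ => hpos i)
    have hrw : ∑ i ∈ Finset.univ.erase i0, 1/(n:ℝ) * μ i = ((n:ℝ)+1)/n := by
      rw [← Finset.mul_sum, hsum0]; ring
    rw [hrw] at hgm
    have hprodpos : 0 ≤ ∏ k ∈ Finset.univ.erase i0, μ k := Finset.prod_nonneg fun i _ => hpos i
    rw [show (∏ i ∈ Finset.univ.erase i0, μ i ^ ((fun _ => 1/(n:ℝ)) i)) =
        (∏ i ∈ Finset.univ.erase i0, μ i) ^ (1/(n:ℝ)) from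
      Real.finset_prod_rpow _ _ (fun i _ => hpos i) _ |>.symm ▸ rfl] at hgm
    calc ∏ k ∈ Finset.univ.erase i0, μ k
        = ((∏ k ∈ Finset.univ.erase i0, μ k) ^ (1/(n:ℝ))) ^ (n:ℕ) := by
          rw [← Real.rpow_natCast (_ ^ (1/(n:ℝ))) n, ← Real.rpow_mul hprodpos]
          rw [one_div, inv_mul_cancel₀ (ne_of_gt hn'), Real.rpow_one]
      _ ≤ (((n:ℝ)+1)/n)^n := pow_le_pow_left₀ (Real.rpow_nonneg hprodpos _) hgm _
  -- ### Conclusion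
  set B : ℝ := ((n:ℝ)+1)^(n-1) / (n:ℝ)^n with hBdef
  have hfact : (((n:ℝ)+1)/n)^n = (n+1) * B := by
    rw [hBdef, div_pow]
    rw [show ((n:ℝ)+1)^n = ((n:ℝ)+1) * ((n:ℝ)+1)^(n-1) by
      rw [← pow_succ']
      congr 1
      omega]
    ring
  have hsumle : ∑ j, (d j)^2 ≤ (n+1) * B := by
    rw [hkey, hcollapse, ← hfact]
    exact hAMGM
  have hex : ∃ j, (d j)^2 ≤ B := by
    by_contra hcon
    push_neg at hcon
    have : (n+1) * B < ∑ j, (d j)^2 := by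
      calc (n+1) * B = ∑ _j : Fin (n+1), B / 1 := by
            rw [Finset.sum_const]
            simp [mul_comm]
        _ < ∑ j, (d j)^2 := by
            apply Finset.sum_lt_sum_of_nonempty
            · exact Finset.univ_nonempty
            · intro j _
              simpa using hcon j
    linarith
  obtain ⟨j, hj⟩ := hex
  refine ⟨j.succAbove, Fin.strictMono_succAbove j, ?_⟩
  have hdj : ‖Matrix.det (Matrix.of fun i a => w (j.succAbove a) i)‖ = d j := rfl
  rw [hdj]
  calc d j = Real.sqrt ((d j)^2) := (Real.sqrt_sq (norm_nonneg _)).symm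
    _ ≤ Real.sqrt B := Real.sqrt_le_sqrt hj
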